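/- Let σ < 0 and 0 < δt < Δt ≤ ΔT. Then the constant C := β + γ·δβ/|δγ| satisfies C < 1. -/

import Mathlib

/-- `β_τ = (1 - σ τ)^(-ΔT/τ)` (real exponent). -/
noncomputable def betaF (σ ΔT τ : ℝ) : ℝ := (1 - σ * τ) ^ (-(ΔT / τ))

/-- `γ_τ = (β_τ² - 1)/(σ (2 - σ τ))`. -/
noncomputable def gammaF (σ ΔT τ : ℝ) : ℝ := ((betaF σ ΔT τ) ^ 2 - 1) / (σ * (2 - σ * τ))

open Real

lemma hasDerivAt_log1p {x : ℝ} (hx : 0 < 1 + x) :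
    HasDerivAt (fun y : ℝ => Real.log (1 + y)) ((1 + x)⁻¹) x := by
  have h := (Real.hasDerivAt_log hx.ne').comp x ((hasDerivAt_id x).const_add 1)
  rw [mul_one] at h; exact h

lemma hasDerivAt_F1 {x : ℝ} (hx : 0 < 1 + x) :
    HasDerivAt (fun y : ℝ => y - y^2/2 + y^3/3 - Real.log (1 + y))
      (1 - x + x^2 - (1 + x)⁻¹) x := by
  have h1 : HasDerivAt (fun y : ℝ => y - y^2/2 + y^3/3) (1 - x + x^2) x := by
    have := (((hasDerivAt_id x).sub ((hasDerivAt_pow 2 x).div_const 2)).add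
      ((hasDerivAt_pow 3 x).div_const 3))
    refine this.congr_deriv ?_
    ring
  exact h1.sub (hasDerivAt_log1p hx)

lemma log_le_cubic {x : ℝ} (hx : 0 ≤ x) : Real.log (1 + x) ≤ x - x^2/2 + x^3/3 := by
  have mono : MonotoneOn (fun y : ℝ => y - y^2/2 + y^3/3 - Real.log (1 + y)) (Set.Ici 0) := by
    apply monotoneOn_of_deriv_nonneg (convex_Ici 0)
    · intro y hy
      simp only [Set.mem_Ici] at hy
      exact (hasDerivAt_F1 (by linarith)).continuousAt.continuousWithinAt
    · intro y hy
      rw [interior_Ici] at hy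
      simp only [Set.mem_Ioi] at hy
      exact (hasDerivAt_F1 (by linarith)).differentiableAt.differentiableWithinAt
    · intro y hy
      rw [interior_Ici] at hy
      simp only [Set.mem_Ioi] at hy
      have h1 : (0:ℝ) < 1 + y := by linarith
      rw [(hasDerivAt_F1 h1).deriv]
      have : (1:ℝ) - y + y^2 - (1 + y)⁻¹ = y^3 / (1 + y) := by
        field_simp
        ring
      rw [this]
      positivity
  have h := mono (Set.self_mem_Ici) (Set.mem_Ici.2 hx) hx
  simp only [Real.log_one] at h
  norm_num at h
  linarith [h]

lemma hasDerivAt_F2 {x : ℝ} (hx : 0 < 1 + x) :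
    HasDerivAt (fun y : ℝ => Real.log (1 + y) - (y - y^2/2 + y^3/3 - y^4/4))
      ((1 + x)⁻¹ - (1 - x + x^2 - x^3)) x := by
  have h1 : HasDerivAt (fun y : ℝ => y - y^2/2 + y^3/3 - y^4/4) (1 - x + x^2 - x^3) x := by
    have := ((((hasDerivAt_id x).sub ((hasDerivAt_pow 2 x).div_const 2)).add
      ((hasDerivAt_pow 3 x).div_const 3)).sub ((hasDerivAt_pow 4 x).div_const 4))
    refine this.congr_deriv ?_
    ring
  exact (hasDerivAt_log1p hx).sub h1

lemma quartic_le_log {x : ℝ} (hx : 0 ≤ x) : x - x^2/2 + x^3/3 - x^4/4 ≤ Real.log (1 + x) := by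
  have mono : MonotoneOn (fun y : ℝ => Real.log (1 + y) - (y - y^2/2 + y^3/3 - y^4/4))
      (Set.Ici 0) := by
    apply monotoneOn_of_deriv_nonneg (convex_Ici 0)
    · intro y hy
      simp only [Set.mem_Ici] at hy
      exact (hasDerivAt_F2 (by linarith)).continuousAt.continuousWithinAt
    · intro y hy
      rw [interior_Ici] at hy
      simp only [Set.mem_Ioi] at hy
      exact (hasDerivAt_F2 (by linarith)).differentiableAt.differentiableWithinAt
    · intro y hy
      rw [interior_Ici] at hy
      simp only [Set.mem_Ioi] at hy
      have h1 : (0:ℝ) < 1 + y := by linarith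
      rw [(hasDerivAt_F2 h1).deriv]
      have : (1 + y)⁻¹ - (1 - y + y^2 - y^3) = y^4 / (1 + y) := by
        field_simp
        ring
      rw [this]
      positivity
  have h := mono (Set.self_mem_Ici) (Set.mem_Ici.2 hx) hx
  simp only [Real.log_one] at h
  norm_num at h
  linarith [h]



lemma onevar {x : ℝ} (hx : 0 < x) :
    (x + 2) * (Real.log (1 + x) - x / (1 + x)) ≤ Real.exp 1 * x * Real.log (1 + x) := by
  have h1x : (0:ℝ) < 1 + x := by linarith
  have hL : 0 < Real.log (1 + x) := Real.log_pos (by linarith)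
  have he : (2.7:ℝ) ≤ Real.exp 1 := by
    have := Real.exp_one_gt_d9
    norm_num at this ⊢
    linarith
  have hmain : (x + 2) * (Real.log (1 + x) - x / (1 + x)) ≤ 2.7 * x * Real.log (1 + x) := by
    rcases le_or_gt x 1.18 with hc | hc
    · have hub := log_le_cubic hx.le
      have hlb := quartic_le_log hx.le
      have hA : Real.log (1 + x) - x / (1 + x) ≤ (x^2/2 - x^3/6 + x^4/3) / (1 + x) := by
        have : x - x^2/2 + x^3/3 - x / (1 + x) = (x^2/2 - x^3/6 + x^4/3) / (1 + x) := by
          field_simp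
          ring
        linarith [this]
      have hpoly : (x + 2) * ((x^2/2 - x^3/6 + x^4/3) / (1 + x))
          ≤ 2.7 * x * (x - x^2/2 + x^3/3 - x^4/4) := by
        rw [mul_comm, div_mul_eq_mul_div, div_le_iff₀ h1x]
        nlinarith [sq_nonneg x, sq_nonneg (x - 1), mul_nonneg hx.le hx.le,
            mul_nonneg (mul_nonneg hx.le hx.le) hx.le, sq_nonneg (x*x),
            mul_nonneg (mul_nonneg (mul_nonneg hx.le hx.le) hx.le) hx.le,
            mul_nonneg (sub_nonneg.2 hc) (mul_nonneg (mul_nonneg hx.le hx.le) hx.le),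
            mul_nonneg (sub_nonneg.2 hc) (mul_nonneg hx.le hx.le),
            mul_nonneg (mul_nonneg (sub_nonneg.2 hc) (sub_nonneg.2 hc)) (mul_nonneg hx.le hx.le)]
      calc (x + 2) * (Real.log (1 + x) - x / (1 + x))
          ≤ (x + 2) * ((x^2/2 - x^3/6 + x^4/3) / (1 + x)) := by
            apply mul_le_mul_of_nonneg_left hA (by linarith)
        _ ≤ 2.7 * x * (x - x^2/2 + x^3/3 - x^4/4) := hpoly
        _ ≤ 2.7 * x * Real.log (1 + x) := by
            apply mul_le_mul_of_nonneg_left hlb (by linarith)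
    · have hA : Real.log (1 + x) - x / (1 + x) ≤ Real.log (1 + x) := by
        have : 0 ≤ x / (1 + x) := by positivity
        linarith
      have h2 : x + 2 ≤ 2.7 * x := by linarith
      calc (x + 2) * (Real.log (1 + x) - x / (1 + x))
          ≤ (x + 2) * Real.log (1 + x) := by
            apply mul_le_mul_of_nonneg_left hA (by linarith)
        _ ≤ 2.7 * x * Real.log (1 + x) := by
            apply mul_le_mul_of_nonneg_right h2 hL.le
  calc (x + 2) * (Real.log (1 + x) - x / (1 + x)) ≤ 2.7 * x * Real.log (1 + x) := hmain
    _ ≤ Real.exp 1 * x * Real.log (1 + x) := by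
        apply mul_le_mul_of_nonneg_right _ hL.le
        apply mul_le_mul_of_nonneg_right he hx.le



noncomputable def gG (K : ℝ) : ℝ → ℝ :=
  fun y => (1 + Real.exp (-(K * Real.log (1 + y) / y))) / (y + 2)

lemma hasDerivAt_gG (K : ℝ) {x : ℝ} (hx : 0 < x) :
    HasDerivAt (gG K)
      ((Real.exp (-(K * Real.log (1 + x) / x)) *
          (-((K * (1 + x)⁻¹ * x - K * Real.log (1 + x) * 1) / x ^ 2)) * (x + 2) -
        (1 + Real.exp (-(K * Real.log (1 + x) / x))) * 1) / (x + 2) ^ 2) x := by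
  have h1x : (0:ℝ) < 1 + x := by linarith
  have hnum : HasDerivAt (fun y : ℝ => K * Real.log (1 + y)) (K * (1 + x)⁻¹) x :=
    (hasDerivAt_log1p h1x).const_mul K
  have hdiv : HasDerivAt (fun y : ℝ => K * Real.log (1 + y) / y)
      ((K * (1 + x)⁻¹ * x - K * Real.log (1 + x) * 1) / x ^ 2) x := by
    exact hnum.div (hasDerivAt_id x) hx.ne'
  have hexp := hdiv.neg.exp
  have hconst := hexp.const_add 1
  have hden : HasDerivAt (fun y : ℝ => y + 2) 1 x := (hasDerivAt_id x).add_const 2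
  exact hconst.div hden (by linarith : x + 2 ≠ 0)

lemma deriv_gG_neg (K : ℝ) {x : ℝ} (hx : 0 < x) (hxK : x ≤ K) :
    deriv (gG K) x < 0 := by
  rw [(hasDerivAt_gG K hx).deriv]
  have h1x : (0:ℝ) < 1 + x := by linarith
  have hL : 0 < Real.log (1 + x) := Real.log_pos (by linarith)
  set L := Real.log (1 + x) with hLdef
  set p := Real.exp (-(K * L / x)) with hpdef
  have hp : 0 < p := Real.exp_pos _
  have hA0 : 0 ≤ L - x / (1 + x) := by
    have h := Real.log_le_sub_one_of_pos (inv_pos.2 h1x)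
    rw [Real.log_inv] at h
    have : (1 + x)⁻¹ - 1 = -(x / (1 + x)) := by field_simp; ring
    rw [this] at h
    linarith
  have hrw : -((K * (1 + x)⁻¹ * x - K * L * 1) / x ^ 2) = K * (L - x / (1 + x)) / x ^ 2 := by
    field_simp
    ring
  rw [hrw]
  apply div_neg_of_neg_of_pos _ (by positivity)
  rw [sub_neg, mul_one]
  -- K * p ≤ x / (e * L)
  have hK : 0 < K := lt_of_lt_of_le hx hxK
  have he : (0:ℝ) < Real.exp 1 := Real.exp_pos 1
  have hKp : K * p ≤ x / (Real.exp 1 * L) := by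
    have harg : 0 < K * L / x := by positivity
    have h1 : Real.exp 1 * (K * L / x) ≤ Real.exp (K * L / x) := by
      have h2 := Real.add_one_le_exp (K * L / x - 1)
      have h3 : Real.exp (K * L / x - 1) = Real.exp (K * L / x) / Real.exp 1 := by
        rw [Real.exp_sub]
      rw [h3] at h2
      have h2' : K * L / x ≤ Real.exp (K * L / x) / Real.exp 1 := by linarith
      rw [le_div_iff₀ he] at h2'
      linarith
    have hp_eq : p = (Real.exp (K * L / x))⁻¹ := by rw [hpdef, Real.exp_neg]
    rw [hp_eq]
    rw [div_eq_mul_inv, mul_comm]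
    have hexppos : 0 < Real.exp (K * L / x) := Real.exp_pos _
    have h4 : (Real.exp (K * L / x))⁻¹ ≤ (Real.exp 1 * (K * L / x))⁻¹ := by
      apply inv_anti₀ (by positivity) h1
    calc (Real.exp (K * L / x))⁻¹ * K ≤ (Real.exp 1 * (K * L / x))⁻¹ * K := by
          apply mul_le_mul_of_nonneg_right h4 hK.le
      _ = x * (Real.exp 1 * L)⁻¹ := by
          field_simp
      _ = x / (Real.exp 1 * L) := by rw [div_eq_mul_inv]
  have honevar := onevar hx
  have step : p * (K * (L - x / (1 + x)) / x ^ 2) * (x + 2)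
      = (K * p) * ((x + 2) * (L - x / (1 + x))) / x ^ 2 := by ring
  have step2 : (K * p) * ((x + 2) * (L - x / (1 + x))) ≤ (x / (Real.exp 1 * L)) * (Real.exp 1 * x * L) := by
    apply mul_le_mul hKp honevar (by positivity) (by positivity)
  have step3 : (x / (Real.exp 1 * L)) * (Real.exp 1 * x * L) = x ^ 2 := by
    field_simp
  have : p * (K * (L - x / (1 + x)) / x ^ 2) * (x + 2) ≤ 1 := by
    rw [step]
    rw [div_le_one (by positivity)]
    calc (K * p) * ((x + 2) * (L - x / (1 + x))) ≤ (x / (Real.exp 1 * L)) * (Real.exp 1 * x * L) := step2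
      _ = x ^ 2 := step3
  linarith

lemma key_discrete (K x₁ x₂ : ℝ) (h1 : 0 < x₁) (h12 : x₁ < x₂) (h2K : x₂ ≤ K) :
    (1 + Real.exp (-(K * Real.log (1 + x₂) / x₂))) * (x₁ + 2)
      < (1 + Real.exp (-(K * Real.log (1 + x₁) / x₁))) * (x₂ + 2) := by
  have anti : StrictAntiOn (gG K) (Set.Icc x₁ x₂) := by
    apply strictAntiOn_of_deriv_neg (convex_Icc x₁ x₂)
    · intro y hy
      have hy1 : 0 < y := lt_of_lt_of_le h1 hy.1
      exact (hasDerivAt_gG K hy1).continuousAt.continuousWithinAt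
    · intro y hy
      rw [interior_Icc] at hy
      exact deriv_gG_neg K (h1.trans hy.1) (hy.2.le.trans h2K)
  have h := anti (Set.mem_Icc.2 ⟨le_rfl, h12.le⟩) (Set.mem_Icc.2 ⟨h12.le, le_rfl⟩) h12
  unfold gG at h
  rw [div_lt_div_iff₀ (by linarith) (by linarith)] at h
  linarith




lemma betaF_eq {σ τ : ℝ} (ΔT : ℝ) (hσ : σ < 0) (hτ : 0 < τ) :
    betaF σ ΔT τ = Real.exp (-((-σ * ΔT) * Real.log (1 + -σ * τ) / (-σ * τ))) := by
  unfold betaF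
  have hb : (0:ℝ) < 1 - σ * τ := by nlinarith
  rw [Real.rpow_def_of_pos hb]
  congr 1
  have h1 : (1:ℝ) - σ * τ = 1 + -σ * τ := by ring
  rw [h1]
  field_simp [hσ.ne, hτ.ne']

lemma betaF_pos {σ τ : ℝ} (ΔT : ℝ) (hσ : σ < 0) (hτ : 0 < τ) : 0 < betaF σ ΔT τ := by
  rw [betaF_eq ΔT hσ hτ]; exact Real.exp_pos _

lemma betaF_lt_one {σ τ ΔT : ℝ} (hσ : σ < 0) (hτ : 0 < τ) (hΔT : 0 < ΔT) :
    betaF σ ΔT τ < 1 := by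
  rw [betaF_eq ΔT hσ hτ]
  rw [Real.exp_lt_one_iff]
  have hc : 0 < -σ := neg_pos.2 hσ
  have hL : 0 < Real.log (1 + -σ * τ) := Real.log_pos (by nlinarith)
  have : 0 < (-σ * ΔT) * Real.log (1 + -σ * τ) / (-σ * τ) := by positivity
  linarith

lemma betaF_mono {σ τ₁ τ₂ ΔT : ℝ} (hσ : σ < 0) (hτ₁ : 0 < τ₁) (h12 : τ₁ < τ₂)
    (hΔT : 0 < ΔT) : betaF σ ΔT τ₁ < betaF σ ΔT τ₂ := by
  have hc : 0 < -σ := neg_pos.2 hσ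
  have hτ₂ : 0 < τ₂ := hτ₁.trans h12
  rw [betaF_eq ΔT hσ hτ₁, betaF_eq ΔT hσ hτ₂]
  apply Real.exp_lt_exp.2
  set x₁ := -σ * τ₁ with hx1
  set x₂ := -σ * τ₂ with hx2
  have hx1p : 0 < x₁ := by positivity
  have hx2p : 0 < x₂ := by positivity
  have hx12 : x₁ < x₂ := by
    rw [hx1, hx2]; exact mul_lt_mul_of_pos_left h12 hc
  have hK : 0 < -σ * ΔT := by positivity
  have hL1 : 0 < Real.log (1 + x₁) := Real.log_pos (by linarith)
  -- Bernoulli: 1 + x₂ < (1+x₁)^(x₂/x₁)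
  have hbern : 1 + x₂ < (1 + x₁) ^ (x₂ / x₁ : ℝ) := by
    have hp : 1 < x₂ / x₁ := (one_lt_div hx1p).2 hx12
    have h := one_add_mul_self_lt_rpow_one_add (by linarith : (-1:ℝ) ≤ x₁) hx1p.ne' hp
    rwa [div_mul_cancel₀ _ hx1p.ne'] at h
  have hlog : Real.log (1 + x₂) < (x₂ / x₁) * Real.log (1 + x₁) := by
    have := Real.log_lt_log (by linarith : (0:ℝ) < 1 + x₂) hbern
    rwa [Real.log_rpow (by linarith : (0:ℝ) < 1 + x₁)] at this
  have hfrac : Real.log (1 + x₂) / x₂ < Real.log (1 + x₁) / x₁ := by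
    rw [div_lt_div_iff₀ hx2p hx1p]
    calc Real.log (1 + x₂) * x₁ < (x₂ / x₁ * Real.log (1 + x₁)) * x₁ :=
          mul_lt_mul_of_pos_right hlog hx1p
      _ = Real.log (1 + x₁) * x₂ := by field_simp
  have : -σ * ΔT * Real.log (1 + x₂) / x₂ < -σ * ΔT * Real.log (1 + x₁) / x₁ := by
    rw [mul_div_assoc, mul_div_assoc]
    exact mul_lt_mul_of_pos_left hfrac hK
  linarith

lemma final_algebra (b₁ b₂ D₁ D₂ γ₁ γ₂ : ℝ)
    (hb1 : 0 < b₁) (h12 : b₁ < b₂) (hb2 : b₂ < 1)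
    (hD1 : 0 < D₁) (hD12 : D₁ < D₂)
    (hkey : (1 + b₂) * D₁ < (1 + b₁) * D₂)
    (hγ1 : γ₁ = (1 - b₁^2) / D₁) (hγ2 : γ₂ = (1 - b₂^2) / D₂) :
    b₂ + γ₂ * (b₂ - b₁) / |γ₂ - γ₁| < 1 := by
  have hD2 : 0 < D₂ := hD1.trans hD12
  have hb1' : b₁ < 1 := h12.trans hb2
  have hγdiff : γ₂ < γ₁ := by
    rw [hγ1, hγ2, div_lt_div_iff₀ hD2 hD1]
    nlinarith [mul_pos (sub_pos.2 hb2) (sub_pos.2 hkey),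
      mul_pos (mul_pos (sub_pos.2 h12) (by linarith : (0:ℝ) < 1 + b₁)) hD2]
  have habs : |γ₂ - γ₁| = γ₁ - γ₂ := by
    rw [abs_of_neg (by linarith)]; ring
  rw [habs]
  have hpos : 0 < γ₁ - γ₂ := by linarith
  have hlt : γ₂ * (b₂ - b₁) / (γ₁ - γ₂) < 1 - b₂ := by
    rw [div_lt_iff₀ hpos]
    have e1 : γ₁ - γ₂ = ((1 - b₁^2) * D₂ - (1 - b₂^2) * D₁) / (D₁ * D₂) := by
      rw [hγ1, hγ2]; field_simp
    have e2 : γ₂ * (b₂ - b₁) = (1 - b₂^2) * (b₂ - b₁) / D₂ := by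
      rw [hγ2]; ring
    rw [e1, e2, ← mul_div_assoc, div_lt_div_iff₀ hD2 (by positivity)]
    nlinarith [mul_pos (mul_pos (mul_pos hD2 (sub_pos.2 hb2)) (sub_pos.2 hb1'))
      (sub_pos.2 hkey)]
  linarith

theorem constant_C_lt_one (σ δt Δt ΔT : ℝ) (hσ : σ < 0)
    (hδt : 0 < δt) (hδtΔt : δt < Δt) (hΔtΔT : Δt ≤ ΔT) :
    betaF σ ΔT Δt +
      gammaF σ ΔT Δt * (betaF σ ΔT Δt - betaF σ ΔT δt) /
        |gammaF σ ΔT Δt - gammaF σ ΔT δt| < 1 := by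
  have hΔt : 0 < Δt := hδt.trans hδtΔt
  have hΔT : 0 < ΔT := lt_of_lt_of_le hΔt hΔtΔT
  have hc : 0 < -σ := neg_pos.2 hσ
  set b₁ := betaF σ ΔT δt with hb₁
  set b₂ := betaF σ ΔT Δt with hb₂
  have hb1 : 0 < b₁ := betaF_pos ΔT hσ hδt
  have h12 : b₁ < b₂ := betaF_mono hσ hδt hδtΔt hΔT
  have hb2 : b₂ < 1 := betaF_lt_one hσ hΔt hΔT
  set D₁ : ℝ := -σ * (-σ * δt + 2) with hD₁def
  set D₂ : ℝ := -σ * (-σ * Δt + 2) with hD₂def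
  have hD1 : 0 < D₁ := by
    rw [hD₁def]
    have h2 : (0:ℝ) < -σ * δt + 2 := by nlinarith
    exact mul_pos hc h2
  have hD12 : D₁ < D₂ := by
    rw [hD₁def, hD₂def]
    nlinarith [mul_pos (mul_pos hc hc) (sub_pos.2 hδtΔt)]
  have hkey : (1 + b₂) * D₁ < (1 + b₁) * D₂ := by
    have h := key_discrete (-σ * ΔT) (-σ * δt) (-σ * Δt)
      (by positivity) (by nlinarith) (by nlinarith)
    rw [hb₁, hb₂, betaF_eq ΔT hσ hδt, betaF_eq ΔT hσ hΔt, hD₁def, hD₂def]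
    nlinarith [mul_lt_mul_of_pos_left h hc]
  have hγ1 : gammaF σ ΔT δt = (1 - b₁^2) / D₁ := by
    unfold gammaF
    rw [← hb₁]
    have h : σ * (2 - σ * δt) = -D₁ := by rw [hD₁def]; ring
    rw [h, div_neg, ← neg_div]
    congr 1
    ring
  have hγ2 : gammaF σ ΔT Δt = (1 - b₂^2) / D₂ := by
    unfold gammaF
    rw [← hb₂]
    have h : σ * (2 - σ * Δt) = -D₂ := by rw [hD₂def]; ring
    rw [h, div_neg, ← neg_div]
    congr 1
    ring
  rw [hγ1, hγ2]
  exact final_algebra b₁ b₂ D₁ D₂ _ _ hb1 h12 hb2 hD1 hD12 hkey rfl rfl
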